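/- Let q = 5, ε ∈ (0, 1/2], let n ≥ 2 be even, and let ρ ≥ 1 be a real number such that α_ε^{1/ρ} ≥ 1/(2 cos(π/5)). Then the minimum of Qⁿ(ρ, P) over all probability mass functions P on (ZMod 5)ⁿ equals 5^{−n/2}; equivalently, E_x^n(ρ) := −(ρ/n) log₂ min_P Qⁿ(ρ, P) = ρ log₂ √5. -/

import Mathlib

/-- The typewriter channel transition probabilities on `ZMod q`. -/
noncomputable def W (q : ℕ) (ε : ℝ) (y x : ZMod q) : ℝ :=
  if y = x then 1 - ε else if y = x + 1 then ε else 0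

/-- `α_ε = √(ε(1-ε))`. -/
noncomputable def alphaE (ε : ℝ) : ℝ := Real.sqrt (ε * (1 - ε))

/-- Single-letter Bhattacharyya kernel `g₁(a,b) = Σ_y √(W(y|a) W(y|b))`. -/
noncomputable def g1 (q : ℕ) [NeZero q] (ε : ℝ) (a b : ZMod q) : ℝ :=
  ∑ y : ZMod q, Real.sqrt (W q ε y a * W q ε y b)

/-- `gₙ(x,x') = ∏ₖ g₁(xₖ, x'ₖ)`. -/
noncomputable def gn (q : ℕ) [NeZero q] (n : ℕ) (ε : ℝ) (x x' : Fin n → ZMod q) : ℝ :=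
  ∏ k, g1 q ε (x k) (x' k)

/-- The quadratic form `Qⁿ(ρ, P) = Σ_{x,x'} P(x)P(x') gₙ(x,x')^{1/ρ}`
(real `rpow`, so `0^{1/ρ} = 0` for `ρ ≥ 1`). -/
noncomputable def Qn (q : ℕ) [NeZero q] (n : ℕ) (ε ρ : ℝ)
    (P : (Fin n → ZMod q) → ℝ) : ℝ :=
  ∑ x : Fin n → ZMod q, ∑ x' : Fin n → ZMod q,
    P x * P x' * (gn q n ε x x') ^ (1 / ρ)

open Real Finset

/-! ### Auxiliary facts -/

lemma sqrt5_sq : Real.sqrt 5 ^ 2 = 5 := Real.sq_sqrt (by norm_num)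

lemma sqrt5_gt : 2 < Real.sqrt 5 := by
  nlinarith [sqrt5_sq, Real.sqrt_nonneg 5]

lemma zsum (f : ZMod 5 → ℝ) : ∑ y, f y = f 0 + f 1 + f 2 + f 3 + f 4 :=
  Fin.sum_univ_five f

lemma g1_eq (ε : ℝ) (h0 : 0 ≤ ε) (h1 : ε ≤ 1) (a b : ZMod 5) :
    g1 5 ε a b = if a - b = 0 then 1 else if a - b = 1 ∨ a - b = 4 then alphaE ε else 0 := by
  have h1' : (0:ℝ) ≤ 1 - ε := by linarith
  have e1 : Real.sqrt ((1-ε)*(1-ε)) = 1 - ε := Real.sqrt_mul_self h1'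
  have e2 : Real.sqrt (ε*(1-ε)) = alphaE ε := rfl
  have e3 : Real.sqrt ((1-ε)*ε) = alphaE ε := by rw [mul_comm]; rfl
  have e4 : Real.sqrt (ε*ε) = ε := Real.sqrt_mul_self h0
  have hcases : ∀ c : ZMod 5, c = 0 ∨ c = 1 ∨ c = 2 ∨ c = 3 ∨ c = 4 := by decide
  rcases hcases a with rfl | rfl | rfl | rfl | rfl <;> rcases hcases b with rfl | rfl | rfl | rfl | rfl <;>
    simp +decide [g1, W, zsum, e1, e2, e3, e4]

lemma g1_nonneg (ε : ℝ) (a b : ZMod 5) : 0 ≤ g1 5 ε a b :=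
  Finset.sum_nonneg fun _ _ => Real.sqrt_nonneg _

/-! ### The auxiliary kernel `cc` and its Gram decomposition -/

noncomputable def ccK : ℝ := 1 - (Real.sqrt 5)⁻¹

lemma ccK_nonneg : 0 ≤ ccK := by
  have h := sqrt5_gt
  have : (Real.sqrt 5)⁻¹ ≤ 1 := by rw [inv_le_one_iff₀]; right; linarith
  simp [ccK]; linarith

lemma cos_two_pi_sub' (x : ℝ) : Real.cos (2*π - x) = Real.cos x := by
  rw [show 2*π - x = -x + 2*π by ring, Real.cos_add_two_pi, Real.cos_neg]

lemma cos_k (k : ℕ) (hk : k < 5) :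
    Real.cos ((k : ℝ) * (2 * π / 5)) =
      if k = 0 then 1 else if k = 1 ∨ k = 4 then (Real.sqrt 5 - 1)/4 else -((1 + Real.sqrt 5)/4) := by
  have c1 : Real.cos ((1:ℝ) * (2 * π / 5)) = (Real.sqrt 5 - 1)/4 := by
    have : (1:ℝ) * (2 * π / 5) = 2 * (π/5) := by ring
    rw [this, Real.cos_two_mul, Real.cos_pi_div_five]
    nlinarith [sqrt5_sq]
  have c2 : Real.cos ((2:ℝ) * (2 * π / 5)) = -((1 + Real.sqrt 5)/4) := by
    have : (2:ℝ) * (2 * π / 5) = π - π/5 := by ring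
    rw [this, Real.cos_pi_sub, Real.cos_pi_div_five]
  have c3 : Real.cos ((3:ℝ) * (2 * π / 5)) = -((1 + Real.sqrt 5)/4) := by
    rw [show (3:ℝ) * (2 * π / 5) = 2*π - (2:ℝ)*(2*π/5) by ring, cos_two_pi_sub', c2]
  have c4 : Real.cos ((4:ℝ) * (2 * π / 5)) = (Real.sqrt 5 - 1)/4 := by
    rw [show (4:ℝ) * (2 * π / 5) = 2*π - (1:ℝ)*(2*π/5) by ring, cos_two_pi_sub', c1]
  interval_cases k
  · norm_num
  · simpa using c1
  · simpa using c2
  · simpa using c3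
  · simpa using c4

noncomputable def mvec : Fin 3 → ZMod 5 → ℝ :=
  fun t a => match t with
  | 0 => Real.sqrt (Real.sqrt 5)⁻¹
  | 1 => Real.sqrt ccK * Real.cos ((a.val : ℝ) * (2 * π / 5))
  | 2 => Real.sqrt ccK * Real.sin ((a.val : ℝ) * (2 * π / 5))

noncomputable def cc (a b : ZMod 5) : ℝ := ∑ t : Fin 3, mvec t a * mvec t b

lemma cc_eq_cos (a b : ZMod 5) :
    cc a b = (Real.sqrt 5)⁻¹ + ccK * Real.cos (((a.val : ℝ) - b.val) * (2 * π / 5)) := by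
  have h1 : Real.sqrt (Real.sqrt 5)⁻¹ * Real.sqrt (Real.sqrt 5)⁻¹ = (Real.sqrt 5)⁻¹ :=
    Real.mul_self_sqrt (by positivity)
  have h2 : Real.sqrt ccK * Real.sqrt ccK = ccK := Real.mul_self_sqrt ccK_nonneg
  rw [cc, Fin.sum_univ_three]
  show Real.sqrt (Real.sqrt 5)⁻¹ * Real.sqrt (Real.sqrt 5)⁻¹ + _ + _ = _
  rw [show ((a.val : ℝ) - b.val) * (2 * π / 5)
      = (a.val : ℝ) * (2 * π / 5) - (b.val : ℝ) * (2 * π / 5) by ring, Real.cos_sub]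
  simp only [mvec]
  linear_combination h1 + (Real.cos ((a.val:ℝ) * (2 * π / 5)) * Real.cos ((b.val:ℝ) * (2 * π / 5)) +
    Real.sin ((a.val:ℝ) * (2 * π / 5)) * Real.sin ((b.val:ℝ) * (2 * π / 5))) * h2

lemma val_sub_int (a b : ZMod 5) :
    ∃ z : ℤ, ((a.val : ℝ) - b.val) = (((a - b).val : ℝ)) + 5 * z := by
  have h : (5:ℤ) ∣ ((a.val : ℤ) - b.val - ((a-b).val : ℤ)) := by
    apply (ZMod.intCast_zmod_eq_zero_iff_dvd _ 5).mp
    push_cast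
    rw [ZMod.natCast_rightInverse a, ZMod.natCast_rightInverse b,
      ZMod.natCast_rightInverse (a - b)]
    ring
  obtain ⟨z, hz⟩ := h
  refine ⟨z, ?_⟩
  have : ((a.val : ℤ) - b.val) = ((a-b).val : ℤ) + 5 * z := by omega
  exact_mod_cast congrArg (fun t : ℤ => (t : ℝ)) this

lemma cc_val (a b : ZMod 5) :
    cc a b = if a - b = 0 then 1
      else if a - b = 1 ∨ a - b = 4 then (Real.sqrt 5 - 1)/2 else 0 := by
  obtain ⟨z, hz⟩ := val_sub_int a b
  rw [cc_eq_cos, hz]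
  rw [show ((((a-b).val : ℝ)) + 5 * z) * (2 * π / 5)
      = (((a-b).val : ℝ)) * (2 * π / 5) + (z : ℝ) * (2 * π) by ring]
  rw [Real.cos_add_int_mul_two_pi]
  rw [cos_k _ (ZMod.val_lt (a-b))]
  have h5 := sqrt5_sq
  have hgt := sqrt5_gt
  have hcases : ∀ c : ZMod 5, c = 0 ∨ c = 1 ∨ c = 2 ∨ c = 3 ∨ c = 4 := by decide
  rcases hcases (a - b) with h | h | h | h | h <;> rw [h] <;>
    simp +decide only [ccK, if_true, if_false] <;>
    first
      | done
      | (have hpos : (0:ℝ) < Real.sqrt 5 := by linarith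
         field_simp <;> nlinarith [h5])

/-! ### Lower bound -/

lemma lower_bound (n : ℕ) (ε ρ : ℝ) (hε : 0 < ε) (hε' : ε ≤ 1/2) (hρ : 1 ≤ ρ)
    (hcond : 1 / (2 * Real.cos (Real.pi / 5)) ≤ alphaE ε ^ (1 / ρ))
    (P : (Fin n → ZMod 5) → ℝ) (hP0 : ∀ x, 0 ≤ P x) (hP1 : ∑ x, P x = 1) :
    (Real.sqrt 5 ^ n)⁻¹ ≤ Qn 5 n ε ρ P := by
  have h5 := sqrt5_sq
  have hgt := sqrt5_gt
  have hρ0 : (0:ℝ) < ρ := lt_of_lt_of_le one_pos hρ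
  have hrne : (1/ρ) ≠ 0 := by positivity
  have hcond' : (Real.sqrt 5 - 1)/2 ≤ alphaE ε ^ (1/ρ) := by
    refine le_trans (le_of_eq ?_) hcond
    rw [Real.cos_pi_div_five]
    field_simp
    nlinarith [h5]
  have hccnn : ∀ a b : ZMod 5, 0 ≤ cc a b := by
    intro a b
    rw [cc_val]
    split_ifs <;> norm_num <;> linarith
  have hccle : ∀ a b : ZMod 5, cc a b ≤ (g1 5 ε a b) ^ (1/ρ) := by
    intro a b
    rw [cc_val, g1_eq ε (le_of_lt hε) (by linarith)]
    split_ifs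
    · rw [Real.one_rpow]
    · exact hcond'
    · rw [Real.zero_rpow hrne]
  set piF := Fintype.piFinset (fun _ : Fin n => (Finset.univ : Finset (Fin 3))) with hpiF
  set T : (Fin n → Fin 3) → ℝ := fun f => ∑ x : Fin n → ZMod 5, P x * ∏ k, mvec (f k) (x k)
    with hT
  have key1 : ∀ x x' : Fin n → ZMod 5, (∏ k, cc (x k) (x' k))
      = ∑ f ∈ piF, (∏ k, mvec (f k) (x k)) * (∏ k, mvec (f k) (x' k)) := by
    intro x x'
    simp only [cc]
    rw [Finset.prod_univ_sum]
    exact Finset.sum_congr rfl (fun f _ => by rw [← Finset.prod_mul_distrib])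
  have key2 : (∑ x, ∑ x', P x * P x' * ∏ k, cc (x k) (x' k)) = ∑ f ∈ piF, T f * T f := by
    calc (∑ x, ∑ x', P x * P x' * ∏ k, cc (x k) (x' k))
        = ∑ x, ∑ x', ∑ f ∈ piF,
            (P x * ∏ k, mvec (f k) (x k)) * (P x' * ∏ k, mvec (f k) (x' k)) := by
          refine Finset.sum_congr rfl fun x _ => Finset.sum_congr rfl fun x' _ => ?_
          rw [key1, Finset.mul_sum]
          exact Finset.sum_congr rfl fun f _ => by ring
      _ = ∑ x, ∑ f ∈ piF, ∑ x',
            (P x * ∏ k, mvec (f k) (x k)) * (P x' * ∏ k, mvec (f k) (x' k)) :=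
          Finset.sum_congr rfl fun x _ => Finset.sum_comm
      _ = ∑ f ∈ piF, ∑ x, ∑ x',
            (P x * ∏ k, mvec (f k) (x k)) * (P x' * ∏ k, mvec (f k) (x' k)) :=
          Finset.sum_comm
      _ = ∑ f ∈ piF, T f * T f := by
          refine Finset.sum_congr rfl fun f _ => ?_
          rw [hT]
          rw [Finset.sum_mul_sum]
  have hf0 : (fun _ : Fin n => (0 : Fin 3)) ∈ piF := by
    simp [hpiF]
  have hTf0 : T (fun _ => (0:Fin 3)) * T (fun _ => (0:Fin 3)) = (Real.sqrt 5 ^ n)⁻¹ := by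
    have hc : T (fun _ => (0:Fin 3)) = (Real.sqrt (Real.sqrt 5)⁻¹) ^ n := by
      rw [hT]
      simp only [mvec]
      rw [show (∑ x : Fin n → ZMod 5, P x * ∏ _k : Fin n, Real.sqrt (Real.sqrt 5)⁻¹)
          = ∑ x : Fin n → ZMod 5, P x * (Real.sqrt (Real.sqrt 5)⁻¹) ^ n from
        Finset.sum_congr rfl fun x _ => by
          rw [Finset.prod_const, Finset.card_univ, Fintype.card_fin]]
      rw [← Finset.sum_mul, hP1, one_mul]
    rw [hc, ← mul_pow, Real.mul_self_sqrt (by positivity), inv_pow]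
  have step1 : (Real.sqrt 5 ^ n)⁻¹ ≤ ∑ x, ∑ x', P x * P x' * ∏ k, cc (x k) (x' k) := by
    rw [key2, ← hTf0]
    exact Finset.single_le_sum (fun f _ => mul_self_nonneg (T f)) hf0
  refine le_trans step1 ?_
  rw [Qn]
  refine Finset.sum_le_sum fun x _ => Finset.sum_le_sum fun x' _ => ?_
  have hgn : (gn 5 n ε x x') ^ (1/ρ) = ∏ k, (g1 5 ε (x k) (x' k)) ^ (1/ρ) := by
    rw [gn, ← Real.finset_prod_rpow _ _ (fun k _ => g1_nonneg ε _ _)]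
  rw [hgn]
  refine mul_le_mul_of_nonneg_left ?_ (mul_nonneg (hP0 x) (hP0 x'))
  exact Finset.prod_le_prod (fun k _ => hccnn _ _) (fun k _ => hccle _ _)

/-! ### Upper bound: the optimal distribution -/

noncomputable def enc (n m : ℕ) (hm : n = m * 2) (u : Fin m → ZMod 5) : Fin n → ZMod 5 :=
  fun k =>
    let p := (finProdFinEquiv.trans (finCongr hm.symm)).symm k
    if p.2 = 0 then u p.1 else 2 * u p.1

lemma enc_apply (n m : ℕ) (hm : n = m * 2) (u : Fin m → ZMod 5) (i : Fin m) (j : Fin 2) :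
    enc n m hm u ((finProdFinEquiv.trans (finCongr hm.symm)) (i, j))
      = if j = 0 then u i else 2 * u i := by
  simp [enc, Equiv.symm_apply_apply]

lemma enc_inj (n m : ℕ) (hm : n = m * 2) : Function.Injective (enc n m hm) := by
  intro u u' h
  funext i
  have h0 := congrFun h ((finProdFinEquiv.trans (finCongr hm.symm)) (i, 0))
  rwa [enc_apply, enc_apply, if_pos rfl, if_pos rfl] at h0

lemma gn_enc_diag (n m : ℕ) (hm : n = m * 2) (ε : ℝ) (h0 : 0 ≤ ε) (h1 : ε ≤ 1)
    (u : Fin m → ZMod 5) :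
    gn 5 n ε (enc n m hm u) (enc n m hm u) = 1 := by
  rw [gn]
  refine Finset.prod_eq_one fun k _ => ?_
  rw [g1_eq ε h0 h1]
  simp

lemma gn_enc_offdiag (n m : ℕ) (hm : n = m * 2) (ε : ℝ) (h0 : 0 ≤ ε) (h1 : ε ≤ 1)
    (u u' : Fin m → ZMod 5)
    (huu : u ≠ u') : gn 5 n ε (enc n m hm u) (enc n m hm u') = 0 := by
  obtain ⟨i, hi⟩ : ∃ i, u i ≠ u' i := by
    by_contra hcon
    push_neg at hcon
    exact huu (funext hcon)
  have hall : ∀ c : ZMod 5, c ≠ 0 → c = 1 ∨ c = 2 ∨ c = 3 ∨ c = 4 := by decide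
  have hd : u i - u' i ≠ 0 := sub_ne_zero_of_ne hi
  have hzero : ∃ k, g1 5 ε (enc n m hm u k) (enc n m hm u' k) = 0 := by
    rcases hall _ hd with h | h | h | h
    · refine ⟨(finProdFinEquiv.trans (finCongr hm.symm)) (i, 1), ?_⟩
      rw [enc_apply, enc_apply, if_neg (by decide), if_neg (by decide), g1_eq ε h0 h1]
      have : 2 * u i - 2 * u' i = 2 * (u i - u' i) := by ring
      rw [this, h]
      simp +decide
    · refine ⟨(finProdFinEquiv.trans (finCongr hm.symm)) (i, 0), ?_⟩
      rw [enc_apply, enc_apply, if_pos rfl, if_pos rfl, g1_eq ε h0 h1, h]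
      simp +decide
    · refine ⟨(finProdFinEquiv.trans (finCongr hm.symm)) (i, 0), ?_⟩
      rw [enc_apply, enc_apply, if_pos rfl, if_pos rfl, g1_eq ε h0 h1, h]
      simp +decide
    · refine ⟨(finProdFinEquiv.trans (finCongr hm.symm)) (i, 1), ?_⟩
      rw [enc_apply, enc_apply, if_neg (by decide), if_neg (by decide), g1_eq ε h0 h1]
      have : 2 * u i - 2 * u' i = 2 * (u i - u' i) := by ring
      rw [this, h]
      simp +decide
  obtain ⟨k, hk⟩ := hzero
  exact Finset.prod_eq_zero (Finset.mem_univ k) hk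

lemma upper_bound (n m : ℕ) (hm : n = m * 2) (ε ρ : ℝ)
    (h0 : 0 ≤ ε) (h1 : ε ≤ 1) (hρ : 1 ≤ ρ) :
    ∃ P : (Fin n → ZMod 5) → ℝ,
      (∀ x, 0 ≤ P x) ∧ (∑ x, P x = 1) ∧ (Real.sqrt 5 ^ n)⁻¹ = Qn 5 n ε ρ P := by
  have hρ0 : (0:ℝ) < ρ := lt_of_lt_of_le one_pos hρ
  have hrne : (1/ρ) ≠ 0 := by positivity
  set w : ℝ := ((5:ℝ)^m)⁻¹ with hw
  have hw0 : 0 ≤ w := by positivity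
  set img := Finset.image (enc n m hm) Finset.univ with himg
  set P : (Fin n → ZMod 5) → ℝ := fun x => if x ∈ img then w else 0 with hP
  have hcard : img.card = 5^m := by
    rw [himg, Finset.card_image_of_injective _ (enc_inj n m hm), Finset.card_univ,
      Fintype.card_fun, ZMod.card, Fintype.card_fin]
  refine ⟨P, fun x => by rw [hP]; dsimp only; split_ifs <;> simp [hw0], ?_, ?_⟩
  · rw [hP]
    dsimp only
    rw [Finset.sum_ite_mem, Finset.univ_inter, Finset.sum_const, hcard, nsmul_eq_mul, hw]
    push_cast
    rw [mul_inv_cancel₀ (by positivity)]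
  · have hone : ∀ x : Fin n → ZMod 5,
        (∑ x' : Fin n → ZMod 5, P x * P x' * (gn 5 n ε x x') ^ (1/ρ))
        = if x ∈ img then ∑ x' ∈ img, w * w * (gn 5 n ε x x') ^ (1/ρ) else 0 := by
      intro x
      by_cases hx : x ∈ img
      · rw [if_pos hx, ← Finset.univ_inter img, ← Finset.sum_ite_mem]
        refine Finset.sum_congr rfl fun x' _ => ?_
        rw [hP]
        dsimp only
        rw [if_pos hx]
        split_ifs <;> ring
      · rw [if_neg hx]
        refine Finset.sum_eq_zero fun x' _ => ?_
        rw [hP]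
        dsimp only
        rw [if_neg hx, zero_mul, zero_mul]
    rw [Qn]
    simp only [hone]
    rw [Finset.sum_ite_mem, Finset.univ_inter, himg]
    rw [Finset.sum_image (fun a _ b _ h => enc_inj n m hm h)]
    have hinner : ∀ u : Fin m → ZMod 5,
        (∑ x' ∈ Finset.image (enc n m hm) Finset.univ,
          w * w * (gn 5 n ε (enc n m hm u) x') ^ (1/ρ)) = w * w := by
      intro u
      rw [Finset.sum_image (fun a _ b _ h => enc_inj n m hm h)]
      rw [Finset.sum_eq_single u]
      · rw [gn_enc_diag n m hm ε h0 h1, Real.one_rpow, mul_one]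
      · intro u' _ hne
        rw [gn_enc_offdiag n m hm ε h0 h1 u u' (Ne.symm hne), Real.zero_rpow hrne, mul_zero]
      · intro h
        exact absurd (Finset.mem_univ u) h
    simp only [hinner]
    rw [Finset.sum_const, Finset.card_univ, Fintype.card_fun, ZMod.card, Fintype.card_fin,
      nsmul_eq_mul, hw, hm, pow_mul', Real.sq_sqrt (by norm_num : (0:ℝ) ≤ 5)]
    push_cast
    field_simp

theorem stmt3 (n : ℕ) (hn : 2 ≤ n) (hne : Even n)
    (ε ρ : ℝ) (hε : 0 < ε) (hε' : ε ≤ 1 / 2) (hρ : 1 ≤ ρ)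
    (hcond : 1 / (2 * Real.cos (Real.pi / 5)) ≤ alphaE ε ^ (1 / ρ)) :
    IsLeast
      {v : ℝ | ∃ P : (Fin n → ZMod 5) → ℝ,
        (∀ x, 0 ≤ P x) ∧ (∑ x, P x = 1) ∧ v = Qn 5 n ε ρ P}
      ((Real.sqrt 5 ^ n)⁻¹) := by
  obtain ⟨m, hm⟩ := hne
  have hm2 : n = m * 2 := by omega
  constructor
  · obtain ⟨P, h0, h1, h2⟩ := upper_bound n m hm2 ε ρ (le_of_lt hε) (by linarith) hρ
    exact ⟨P, h0, h1, h2⟩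
  · rintro v ⟨P, h0, h1, rfl⟩
    exact lower_bound n ε ρ hε hε' hρ hcond P h0 h1
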